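/- Let A^(1),…,A^(N) be N orthonormal bases {|a^(i)_j⟩}_{j=1}^d of ℂ^d. For every POVM {M_k} on ℂ^d and every family of density matrices {σ_k}, the average fidelity (1/(Nd)) Σ_k Σ_{i=1}^N Σ_{j=1}^d ⟨a^(i)_j|M_k|a^(i)_j⟩ ⟨a^(i)_j|σ_k|a^(i)_j⟩ is at most 1 − inf_{‖φ‖=1} (1/N) Σ_{i=1}^N T₂((|⟨φ|a^(i)_j⟩|²)_{j=1}^d). Equivalently, the incompatibility Q(A^(1),…,A^(N)) = 1 − F_S^max is bounded below by the Tsallis-T₂ entropic uncertainty bound t₂(A^(1),…,A^(N)) = inf_{‖φ‖=1} (1/N) Σ_i T₂((|⟨φ|a^(i)_j⟩|²)_j). -/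

import Mathlib

open Matrix
open scoped BigOperators ComplexOrder

/-- The inner product ⟨x|y⟩ on ℂ^d. -/
noncomputable def qinner {d : ℕ} (x y : Fin d → ℂ) : ℂ := star x ⬝ᵥ y

/-- `a` is an orthonormal basis of ℂ^d (d orthonormal vectors). -/
def IsONB {d : ℕ} (a : Fin d → (Fin d → ℂ)) : Prop :=
  ∀ i j, qinner (a i) (a j) = if i = j then 1 else 0

/-- Measurement distribution p_ρ^B(j) = ⟨b_j|ρ|b_j⟩. -/
noncomputable def probB {d : ℕ} (ρ : Matrix (Fin d) (Fin d) ℂ)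
    (b : Fin d → (Fin d → ℂ)) (j : Fin d) : ℝ :=
  (qinner (b j) (ρ *ᵥ b j)).re

/-- Distribution of a B-measurement after a non-selective A-measurement:
q_ρ^{A→B}(j) = Σ_i ⟨a_i|ρ|a_i⟩ |⟨a_i|b_j⟩|². -/
noncomputable def probAB {d : ℕ} (ρ : Matrix (Fin d) (Fin d) ℂ)
    (a b : Fin d → (Fin d → ℂ)) (j : Fin d) : ℝ :=
  ∑ i, probB ρ a i * ‖qinner (a i) (b j)‖ ^ 2

lemma qinner_conj {d : ℕ} (x y : Fin d → ℂ) : qinner x y = starRingEnd ℂ (qinner y x) := by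
  simp only [qinner, dotProduct, map_sum, RingHom.map_mul, Pi.star_apply, RCLike.star_def,
    Complex.conj_conj]
  exact Finset.sum_congr rfl fun i _ => mul_comm _ _

lemma norm_qinner_comm {d : ℕ} (x y : Fin d → ℂ) : ‖qinner x y‖ = ‖qinner y x‖ := by
  rw [qinner_conj, RCLike.norm_conj]

lemma parseval {d : ℕ} (b : Fin d → (Fin d → ℂ)) (hb : IsONB b) (φ : Fin d → ℂ)
    (hφ : qinner φ φ = 1) : ∑ j, ‖qinner (b j) φ‖ ^ 2 = 1 := by
  set V : Matrix (Fin d) (Fin d) ℂ := Matrix.of fun i j => b j i with hV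
  have h1 : Vᴴ * V = 1 := by
    ext j j'
    have := hb j j'
    simpa [Matrix.mul_apply, Matrix.conjTranspose_apply, qinner, dotProduct,
      Matrix.one_apply, hV] using this
  have h2 : V * Vᴴ = 1 := mul_eq_one_comm.mp h1
  have hz : ∀ j, (Vᴴ *ᵥ φ) j = qinner (b j) φ := by
    intro j
    simp [Matrix.mulVec, dotProduct, qinner, hV, Matrix.conjTranspose_apply]
  have hkey : qinner (Vᴴ *ᵥ φ) (Vᴴ *ᵥ φ) = 1 := by
    rw [qinner, show star (Vᴴ *ᵥ φ) = star φ ᵥ* V by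
      rw [Matrix.star_mulVec]
      congr 1
      rw [Matrix.conjTranspose_conjTranspose]]
    rw [← Matrix.dotProduct_mulVec, Matrix.mulVec_mulVec, h2, Matrix.one_mulVec]
    exact hφ
  have expand : qinner (Vᴴ *ᵥ φ) (Vᴴ *ᵥ φ) = ∑ j, ((‖qinner (b j) φ‖ ^ 2 : ℝ) : ℂ) := by
    rw [qinner]
    simp only [dotProduct, Pi.star_apply]
    refine Finset.sum_congr rfl fun j _ => ?_
    rw [hz j, RCLike.star_def]
    rw [mul_comm, Complex.mul_conj, Complex.normSq_eq_norm_sq]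
  rw [expand] at hkey
  have := congrArg Complex.re hkey
  rw [Complex.re_sum] at this
  simp only [Complex.ofReal_re] at this
  exact this

lemma sum_swap4 {α β γ δ : Type*} [Fintype α] [Fintype β] [Fintype γ] [Fintype δ]
    (F : α → β → γ → δ → ℝ) :
    ∑ i, ∑ j, ∑ l, ∑ r, F i j l r = ∑ l, ∑ r, ∑ i, ∑ j, F i j l r := by
  calc ∑ i, ∑ j, ∑ l, ∑ r, F i j l r
      = ∑ i, ∑ l, ∑ j, ∑ r, F i j l r :=
        Finset.sum_congr rfl fun i _ => Finset.sum_comm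
    _ = ∑ l, ∑ i, ∑ j, ∑ r, F i j l r := Finset.sum_comm
    _ = ∑ l, ∑ i, ∑ r, ∑ j, F i j l r :=
        Finset.sum_congr rfl fun l _ => Finset.sum_congr rfl fun i _ => Finset.sum_comm
    _ = ∑ l, ∑ r, ∑ i, ∑ j, F i j l r :=
        Finset.sum_congr rfl fun l _ => Finset.sum_comm

lemma psd_decomp {d : ℕ} (A : Matrix (Fin d) (Fin d) ℂ) (hA : A.PosSemidef) :
    ∃ (μ : Fin d → ℝ) (v : Fin d → (Fin d → ℂ)),
      (∀ l, 0 ≤ μ l) ∧ (∀ l, qinner (v l) (v l) = 1) ∧ (∑ l, μ l = A.trace.re) ∧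
      (∀ w, (qinner w (A *ᵥ w)).re = ∑ l, μ l * ‖qinner (v l) w‖ ^ 2) := by
  have hH := hA.1
  set U : Matrix (Fin d) (Fin d) ℂ := (hH.eigenvectorUnitary : Matrix (Fin d) (Fin d) ℂ) with hU
  have hUU : star U * U = 1 := Unitary.coe_star_mul_self hH.eigenvectorUnitary
  refine ⟨hH.eigenvalues, fun l i => U i l, fun l => hA.eigenvalues_nonneg l, ?_, ?_, ?_⟩
  · intro l
    have := congrFun (congrFun hUU l) l
    simpa [qinner, dotProduct, Matrix.mul_apply, Matrix.one_apply] using this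
  · have htr : A.trace = ∑ l, (hH.eigenvalues l : ℂ) := by
      conv_lhs => rw [hH.spectral_theorem, Unitary.conjStarAlgAut_apply]
      rw [Matrix.trace_mul_comm, ← Matrix.mul_assoc, hUU, Matrix.one_mul, Matrix.trace_diagonal]
      simp
    rw [htr]
    simp
  · intro w
    have key : qinner w (A *ᵥ w) = ∑ l, (hH.eigenvalues l : ℂ) * ((‖qinner (fun i => U i l) w‖ ^ 2 : ℝ) : ℂ) := by
      conv_lhs => rw [hH.spectral_theorem, Unitary.conjStarAlgAut_apply]
      have hmv : (U * diagonal (RCLike.ofReal ∘ hH.eigenvalues) * star U) *ᵥ w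
          = U *ᵥ (diagonal (RCLike.ofReal ∘ hH.eigenvalues) *ᵥ (star U *ᵥ w)) := by
        rw [← mulVec_mulVec, ← mulVec_mulVec]
      rw [qinner, hmv]
      rw [Matrix.dotProduct_mulVec]
      have hsw : star (star U *ᵥ w) = star w ᵥ* U := by
        rw [Matrix.star_mulVec]
        congr 1
        rw [← Matrix.star_eq_conjTranspose, star_star]
      rw [← hsw]
      set y := star U *ᵥ w with hy
      have hd : diagonal (RCLike.ofReal ∘ hH.eigenvalues) *ᵥ y
          = fun l => (hH.eigenvalues l : ℂ) * y l := by
        funext l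
        simp [Matrix.mulVec_diagonal]
      rw [hd]
      simp only [dotProduct, Pi.star_apply]
      refine Finset.sum_congr rfl fun l _ => ?_
      have hyl : y l = qinner (fun i => U i l) w := by
        simp [hy, Matrix.mulVec, dotProduct, qinner]
      rw [hyl]
      set z := qinner (fun i => U i l) w
      rw [show star z * ((hH.eigenvalues l : ℂ) * z) = (hH.eigenvalues l : ℂ) * (z * star z) by ring]
      congr 1
      rw [RCLike.star_def, Complex.mul_conj]
      rw [Complex.normSq_eq_norm_sq]
    rw [key, Complex.re_sum]
    refine Finset.sum_congr rfl fun l _ => ?_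
    rw [← Complex.ofReal_mul, Complex.ofReal_re]

theorem Q_ge_tsallisEUR {d N : ℕ} (hd : 0 < d) (hN : 0 < N)
    (a : Fin N → Fin d → (Fin d → ℂ)) (ha : ∀ i, IsONB (a i))
    (m : ℕ) (M σ : Fin m → Matrix (Fin d) (Fin d) ℂ)
    (hM : ∀ k, (M k).PosSemidef) (hMsum : ∑ k, M k = 1)
    (hσ : ∀ k, (σ k).PosSemidef) (hσtr : ∀ k, (σ k).trace = 1) :
    (1 / ((N : ℝ) * d)) * ∑ k, ∑ i, ∑ j,
        (qinner (a i j) (M k *ᵥ a i j)).re * (qinner (a i j) (σ k *ᵥ a i j)).re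
      ≤ 1 - sInf {x : ℝ | ∃ φ : Fin d → ℂ, qinner φ φ = 1 ∧
          x = (1 / (N : ℝ)) * ∑ i, (1 - ∑ j, ‖qinner φ (a i j)‖ ^ 4)} := by
  have hNR : (0 : ℝ) < N := Nat.cast_pos.mpr hN
  have hdR : (0 : ℝ) < d := Nat.cast_pos.mpr hd
  set S : Set ℝ := {x : ℝ | ∃ φ : Fin d → ℂ, qinner φ φ = 1 ∧
      x = (1 / (N : ℝ)) * ∑ i, (1 - ∑ j, ‖qinner φ (a i j)‖ ^ 4)} with hS
  set c := sInf S with hc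
  have hpar : ∀ (i : Fin N) (φ : Fin d → ℂ), qinner φ φ = 1 →
      ∑ j, ‖qinner φ (a i j)‖ ^ 2 = 1 := by
    intro i φ hφ
    have := parseval (a i) (ha i) φ hφ
    rw [← this]
    exact Finset.sum_congr rfl fun j _ => by rw [norm_qinner_comm]
  have hsum4 : ∀ (i : Fin N) (φ : Fin d → ℂ), qinner φ φ = 1 →
      ∑ j, ‖qinner φ (a i j)‖ ^ 4 ≤ 1 := by
    intro i φ hφ
    have h2 := hpar i φ hφ
    have hp0 : ∀ j, (0:ℝ) ≤ ‖qinner φ (a i j)‖ ^ 2 := fun j => sq_nonneg _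
    have hple : ∀ j, ‖qinner φ (a i j)‖ ^ 2 ≤ 1 := by
      intro j
      rw [← h2]
      exact Finset.single_le_sum (fun j _ => hp0 j) (Finset.mem_univ j)
    calc ∑ j, ‖qinner φ (a i j)‖ ^ 4
        = ∑ j, (‖qinner φ (a i j)‖ ^ 2) * (‖qinner φ (a i j)‖ ^ 2) := by
          refine Finset.sum_congr rfl fun j _ => by ring
      _ ≤ ∑ j, 1 * (‖qinner φ (a i j)‖ ^ 2) := by
          exact Finset.sum_le_sum fun j _ => mul_le_mul_of_nonneg_right (hple j) (hp0 j)
      _ = 1 := by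
          simp only [one_mul]
          exact h2
  have hsum40 : ∀ (i : Fin N) (φ : Fin d → ℂ), (0:ℝ) ≤ ∑ j, ‖qinner φ (a i j)‖ ^ 4 :=
    fun i φ => Finset.sum_nonneg fun j _ => by positivity
  have hmem : ∀ φ : Fin d → ℂ, qinner φ φ = 1 →
      ((1 / (N : ℝ)) * ∑ i, (1 - ∑ j, ‖qinner φ (a i j)‖ ^ 4)) ∈ S := fun φ h => ⟨φ, h, rfl⟩
  have hunit0 : qinner (a ⟨0, hN⟩ ⟨0, hd⟩) (a ⟨0, hN⟩ ⟨0, hd⟩) = 1 := by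
    have := ha ⟨0, hN⟩ ⟨0, hd⟩ ⟨0, hd⟩
    simpa using this
  have hSne : S.Nonempty := ⟨_, hmem _ hunit0⟩
  have hbdd : BddBelow S := by
    refine ⟨0, fun x hx => ?_⟩
    obtain ⟨φ, hφ, rfl⟩ := hx
    have : ∀ i : Fin N, (0:ℝ) ≤ 1 - ∑ j, ‖qinner φ (a i j)‖ ^ 4 :=
      fun i => by linarith [hsum4 i φ hφ]
    exact mul_nonneg (by positivity) (Finset.sum_nonneg fun i _ => this i)
  have hcle : ∀ φ : Fin d → ℂ, qinner φ φ = 1 →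
      c ≤ (1 / (N : ℝ)) * ∑ i, (1 - ∑ j, ‖qinner φ (a i j)‖ ^ 4) :=
    fun φ h => csInf_le hbdd (hmem φ h)
  have hc1 : c ≤ 1 := by
    refine (hcle _ hunit0).trans ?_
    rw [one_div, inv_mul_le_iff₀ hNR, mul_one]
    calc ∑ i, (1 - ∑ j, ‖qinner (a ⟨0, hN⟩ ⟨0, hd⟩) (a i j)‖ ^ 4)
        ≤ ∑ i : Fin N, (1:ℝ) := Finset.sum_le_sum fun i _ => by
          linarith [hsum40 i (a ⟨0, hN⟩ ⟨0, hd⟩)]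
      _ = N := by simp
  have hB0 : (0:ℝ) ≤ (N:ℝ) * (1 - c) := by
    have h := hc1
    have : (0:ℝ) ≤ 1 - c := by linarith
    exact mul_nonneg hNR.le this
  -- KEY bound
  have KEY : ∀ φ : Fin d → ℂ, qinner φ φ = 1 →
      ∑ i, ∑ j, ‖qinner φ (a i j)‖ ^ 4 ≤ (N:ℝ) * (1 - c) := by
    intro φ hφ
    have h1 := hcle φ hφ
    rw [one_div, inv_mul_eq_div, le_div_iff₀ hNR] at h1
    have h2 : ∑ i, (1 - ∑ j, ‖qinner φ (a i j)‖ ^ 4)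
        = (N:ℝ) - ∑ i, ∑ j, ‖qinner φ (a i j)‖ ^ 4 := by
      rw [Finset.sum_sub_distrib]
      simp
    rw [h2] at h1
    nlinarith [h1]
  -- Cauchy-Schwarz step
  have CS : ∀ u v : Fin d → ℂ, qinner u u = 1 → qinner v v = 1 →
      ∑ i, ∑ j, ‖qinner u (a i j)‖ ^ 2 * ‖qinner v (a i j)‖ ^ 2 ≤ (N:ℝ) * (1 - c) := by
    intro u v hu hv
    set X := ∑ i, ∑ j, ‖qinner u (a i j)‖ ^ 2 * ‖qinner v (a i j)‖ ^ 2 with hX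
    have hX0 : 0 ≤ X := Finset.sum_nonneg fun i _ => Finset.sum_nonneg fun j _ => by positivity
    have hXsq : X ^ 2 ≤ ((N:ℝ) * (1 - c)) ^ 2 := by
      have hcs : X ^ 2 ≤ (∑ i, ∑ j, (‖qinner u (a i j)‖ ^ 2) ^ 2)
          * (∑ i, ∑ j, (‖qinner v (a i j)‖ ^ 2) ^ 2) := by
        have hprod := Finset.sum_mul_sq_le_sq_mul_sq Finset.univ
          (fun p : Fin N × Fin d => ‖qinner u (a p.1 p.2)‖ ^ 2)
          (fun p : Fin N × Fin d => ‖qinner v (a p.1 p.2)‖ ^ 2)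
        have e1 : (∑ p : Fin N × Fin d, ‖qinner u (a p.1 p.2)‖ ^ 2 * ‖qinner v (a p.1 p.2)‖ ^ 2)
            = ∑ i, ∑ j, ‖qinner u (a i j)‖ ^ 2 * ‖qinner v (a i j)‖ ^ 2 :=
          Fintype.sum_prod_type _
        have e2 : (∑ p : Fin N × Fin d, (‖qinner u (a p.1 p.2)‖ ^ 2) ^ 2)
            = ∑ i, ∑ j, (‖qinner u (a i j)‖ ^ 2) ^ 2 := Fintype.sum_prod_type _
        have e3 : (∑ p : Fin N × Fin d, (‖qinner v (a p.1 p.2)‖ ^ 2) ^ 2)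
            = ∑ i, ∑ j, (‖qinner v (a i j)‖ ^ 2) ^ 2 := Fintype.sum_prod_type _
        rw [hX, ← e1, ← e2, ← e3]
        exact hprod
      have h4 : ∀ (w : Fin d → ℂ), (∑ i, ∑ j, (‖qinner w (a i j)‖ ^ 2) ^ 2)
          = ∑ i, ∑ j, ‖qinner w (a i j)‖ ^ 4 := by
        intro w
        exact Finset.sum_congr rfl fun i _ => Finset.sum_congr rfl fun j _ => by ring
      rw [h4 u, h4 v] at hcs
      calc X ^ 2 ≤ _ := hcs
        _ ≤ ((N:ℝ) * (1 - c)) * ((N:ℝ) * (1 - c)) := by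
            have hu4 := KEY u hu
            have hv4 := KEY v hv
            have h40 : (0:ℝ) ≤ ∑ i, ∑ j, ‖qinner u (a i j)‖ ^ 4 :=
              Finset.sum_nonneg fun i _ => hsum40 i u
            have h40' : (0:ℝ) ≤ ∑ i, ∑ j, ‖qinner v (a i j)‖ ^ 4 :=
              Finset.sum_nonneg fun i _ => hsum40 i v
            exact mul_le_mul hu4 hv4 h40' hB0
        _ = ((N:ℝ) * (1 - c)) ^ 2 := by ring
    nlinarith [hXsq, hX0, hB0]
  -- per-k bound
  have PERK : ∀ k, ∑ i, ∑ j,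
      (qinner (a i j) (M k *ᵥ a i j)).re * (qinner (a i j) (σ k *ᵥ a i j)).re
      ≤ (M k).trace.re * ((N:ℝ) * (1 - c)) := by
    intro k
    obtain ⟨μ, u, hμ0, hu1, hμsum, hμquad⟩ := psd_decomp (M k) (hM k)
    obtain ⟨q, v, hq0, hv1, hqsum, hqquad⟩ := psd_decomp (σ k) (hσ k)
    have step1 : ∑ i, ∑ j,
        (qinner (a i j) (M k *ᵥ a i j)).re * (qinner (a i j) (σ k *ᵥ a i j)).re
        = ∑ l, ∑ r, (μ l * q r) *
            (∑ i, ∑ j, ‖qinner (u l) (a i j)‖ ^ 2 * ‖qinner (v r) (a i j)‖ ^ 2) := by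
      have expand : ∀ (i : Fin N) (j : Fin d),
          (qinner (a i j) (M k *ᵥ a i j)).re * (qinner (a i j) (σ k *ᵥ a i j)).re
          = ∑ l, ∑ r, (μ l * ‖qinner (u l) (a i j)‖ ^ 2) * (q r * ‖qinner (v r) (a i j)‖ ^ 2) := by
        intro i j
        rw [hμquad, hqquad, Finset.sum_mul_sum]
      calc ∑ i, ∑ j, (qinner (a i j) (M k *ᵥ a i j)).re * (qinner (a i j) (σ k *ᵥ a i j)).re
          = ∑ i, ∑ j, ∑ l, ∑ r,
              (μ l * ‖qinner (u l) (a i j)‖ ^ 2) * (q r * ‖qinner (v r) (a i j)‖ ^ 2) :=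
            Finset.sum_congr rfl fun i _ => Finset.sum_congr rfl fun j _ => expand i j
        _ = ∑ l, ∑ r, ∑ i, ∑ j,
              (μ l * ‖qinner (u l) (a i j)‖ ^ 2) * (q r * ‖qinner (v r) (a i j)‖ ^ 2) :=
            sum_swap4 _
        _ = ∑ l, ∑ r, (μ l * q r) *
              (∑ i, ∑ j, ‖qinner (u l) (a i j)‖ ^ 2 * ‖qinner (v r) (a i j)‖ ^ 2) := by
            refine Finset.sum_congr rfl fun l _ => Finset.sum_congr rfl fun r _ => ?_
            rw [Finset.mul_sum]
            refine Finset.sum_congr rfl fun i _ => ?_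
            rw [Finset.mul_sum]
            exact Finset.sum_congr rfl fun j _ => by ring
    rw [step1]
    calc ∑ l, ∑ r, (μ l * q r) *
            (∑ i, ∑ j, ‖qinner (u l) (a i j)‖ ^ 2 * ‖qinner (v r) (a i j)‖ ^ 2)
        ≤ ∑ l, ∑ r, (μ l * q r) * ((N:ℝ) * (1 - c)) := by
          refine Finset.sum_le_sum fun l _ => Finset.sum_le_sum fun r _ => ?_
          exact mul_le_mul_of_nonneg_left (CS (u l) (v r) (hu1 l) (hv1 r))
            (mul_nonneg (hμ0 l) (hq0 r))
      _ = (M k).trace.re * ((N:ℝ) * (1 - c)) := by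
          rw [show ∑ l, ∑ r, (μ l * q r) * ((N:ℝ) * (1 - c))
              = (∑ l, μ l) * (∑ r, q r) * ((N:ℝ) * (1 - c)) by
            rw [Finset.sum_mul_sum, Finset.sum_mul]
            exact Finset.sum_congr rfl fun l _ => by rw [Finset.sum_mul]]
          rw [hμsum, hqsum, hσtr k]
          norm_num
  -- sum over k
  have hsumtr : ∑ k, (M k).trace.re = (d:ℝ) := by
    have : ∑ k, (M k).trace = ((d:ℕ) : ℂ) := by
      rw [← Matrix.trace_sum, hMsum, Matrix.trace_one]
      simp
    calc ∑ k, (M k).trace.re = (∑ k, (M k).trace).re := (Complex.re_sum _ _).symm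
      _ = (d:ℝ) := by rw [this]; simp
  have total : ∑ k, ∑ i, ∑ j,
      (qinner (a i j) (M k *ᵥ a i j)).re * (qinner (a i j) (σ k *ᵥ a i j)).re
      ≤ (d:ℝ) * ((N:ℝ) * (1 - c)) := by
    calc ∑ k, ∑ i, ∑ j,
        (qinner (a i j) (M k *ᵥ a i j)).re * (qinner (a i j) (σ k *ᵥ a i j)).re
        ≤ ∑ k, (M k).trace.re * ((N:ℝ) * (1 - c)) :=
          Finset.sum_le_sum fun k _ => PERK k
      _ = (d:ℝ) * ((N:ℝ) * (1 - c)) := by rw [← Finset.sum_mul, hsumtr]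
  have hfinal : (1 / ((N : ℝ) * d)) * ∑ k, ∑ i, ∑ j,
      (qinner (a i j) (M k *ᵥ a i j)).re * (qinner (a i j) (σ k *ᵥ a i j)).re
      ≤ 1 - c := by
    rw [one_div, inv_mul_le_iff₀ (by positivity)]
    calc ∑ k, ∑ i, ∑ j,
        (qinner (a i j) (M k *ᵥ a i j)).re * (qinner (a i j) (σ k *ᵥ a i j)).re
        ≤ (d:ℝ) * ((N:ℝ) * (1 - c)) := total
      _ = (N:ℝ) * (d:ℝ) * (1 - c) := by ring
  exact hfinal
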